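/- (Itô isometry for simple processes.) Let 0 = t₀ < t₁ < ⋯ < t_m = T, let (𝓕_l)_{l=0,…,m} be an increasing family of sub-σ-algebras of 𝓕 on a probability space (Ω,𝓕,ℙ), and for each k = 0,…,m−1 let h_k be an 𝓕_k-measurable, square-integrable ℝⁿ⊗ℝⁿ-valued random variable and ΔB_k an ℝⁿ⊗ℝⁿ-valued random variable that is 𝓕_{k+1}-measurable, independent of 𝓕_k, and whose n² entries are independent centered Gaussians each of variance t_{k+1} − t_k. Then 𝔼‖Σ_{k=0}^{m−1} h_k ΔB_k‖²_HS = n Σ_{k=0}^{m−1} (t_{k+1} − t_k) 𝔼‖h_k‖²_HS. -/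

import Mathlib

open MeasureTheory ProbabilityTheory Matrix
open scoped NNReal

/-- The Hilbert–Schmidt inner product of two `n × n` real matrices:
`⟨A, B⟩_HS = trace (Aᵀ * B)`. -/
def hsInner {n : ℕ} (A B : Matrix (Fin n) (Fin n) ℝ) : ℝ := (Aᵀ * B).trace

/-- The squared Hilbert–Schmidt norm `‖A‖²_HS`. -/
def hsNormSq {n : ℕ} (A : Matrix (Fin n) (Fin n) ℝ) : ℝ := hsInner A A

instance matrixMeasurableSpace {m n α : Type*} [MeasurableSpace α] :
    MeasurableSpace (Matrix m n α) :=
  inferInstanceAs (MeasurableSpace (m → n → α))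

open Real
open scoped ENNReal

lemma integrable_sq_mul_exp {b : ℝ} (hb : 0 < b) :
    Integrable (fun x : ℝ => x ^ 2 * Real.exp (-b * x ^ 2)) := by
  have := integrable_rpow_mul_exp_neg_mul_sq hb (s := 2) (by norm_num)
  simp_rw [show (2:ℝ) = ((2:ℕ):ℝ) by norm_num, Real.rpow_natCast] at this
  exact this

lemma integral_sq_mul_exp {b : ℝ} (hb : 0 < b) :
    ∫ x : ℝ, x ^ 2 * Real.exp (-b * x ^ 2) = Real.sqrt π / (2 * b * Real.sqrt b) := by
  have h1 : ∫ x : ℝ, x ^ 2 * Real.exp (-b * x ^ 2)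
      = 2 * ∫ x in Set.Ioi (0:ℝ), x ^ 2 * Real.exp (-b * x ^ 2) := by
    rw [← integral_comp_abs (f := fun x => x ^ 2 * Real.exp (-b * x ^ 2))]
    congr 1; funext x; rw [sq_abs]
  have h2 : ∫ x in Set.Ioi (0:ℝ), x ^ 2 * Real.exp (-b * x ^ 2)
      = b ^ (-((2:ℝ) + 1) / 2) * (1 / 2) * Real.Gamma (((2:ℝ) + 1) / 2) := by
    rw [← integral_rpow_mul_exp_neg_mul_rpow (p := 2) (q := 2) two_pos (by norm_num) hb]
    refine setIntegral_congr_fun measurableSet_Ioi (fun x hx => ?_)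
    norm_cast
  have hG : Real.Gamma (((2:ℝ) + 1) / 2) = Real.sqrt π / 2 := by
    rw [show ((2:ℝ) + 1) / 2 = 1/2 + 1 by norm_num, Real.Gamma_add_one (by norm_num),
      Real.Gamma_one_half_eq]
    ring
  have hb32 : b ^ (-((2:ℝ) + 1) / 2) = (b * Real.sqrt b)⁻¹ := by
    rw [show -((2:ℝ)+1)/2 = -(1 + 1/2) by norm_num, Real.rpow_neg hb.le,
      Real.rpow_add hb, Real.rpow_one, ← Real.sqrt_eq_rpow]
  rw [h1, h2, hG, hb32]
  have : Real.sqrt b ≠ 0 := ne_of_gt (Real.sqrt_pos.mpr hb)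
  field_simp

lemma gaussianReal_eq_withDensity (v : ℝ≥0) (hv : v ≠ 0) :
    gaussianReal 0 v = (volume : Measure ℝ).withDensity
      (fun x => ((gaussianPDFReal 0 v x).toNNReal : ℝ≥0∞)) := by
  rw [gaussianReal_of_var_ne_zero 0 hv]
  rfl

lemma integral_gaussianReal_eq (v : ℝ≥0) (hv : v ≠ 0) (g : ℝ → ℝ) :
    ∫ x, g x ∂(gaussianReal 0 v) = ∫ x, gaussianPDFReal 0 v x * g x := by
  rw [gaussianReal_eq_withDensity v hv,
    integral_withDensity_eq_integral_smul (measurable_gaussianPDFReal 0 v).real_toNNReal g]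
  congr 1; funext x
  rw [NNReal.smul_def, smul_eq_mul, Real.coe_toNNReal _ (gaussianPDFReal_nonneg 0 v x)]

lemma gaussianPDFReal_zero_eq (v : ℝ≥0) (x : ℝ) :
    gaussianPDFReal 0 v x = (Real.sqrt (2 * π * v))⁻¹ * Real.exp (-(2 * (v:ℝ))⁻¹ * x ^ 2) := by
  rw [gaussianPDFReal]
  congr 1
  · congr 1; ring

lemma integral_id_gaussianReal (v : ℝ≥0) : ∫ x, x ∂(gaussianReal 0 v) = 0 := by
  by_cases hv : v = 0
  · rw [hv, gaussianReal_zero_var]; simp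
  · rw [integral_gaussianReal_eq v hv]
    set g : ℝ → ℝ := fun x => gaussianPDFReal 0 v x * x with hg
    have hodd : ∀ x, g (-x) = - g x := by
      intro x
      simp only [hg, gaussianPDFReal_zero_eq, neg_sq]
      ring
    have h := (Measure.measurePreserving_neg (volume : Measure ℝ)).integral_comp
      (Homeomorph.neg ℝ).measurableEmbedding g
    have h2 : ∫ x, g (-x) = - ∫ x, g x := by
      simp_rw [hodd]; exact integral_neg g
    rw [h] at h2
    linarith

lemma integral_sq_gaussianReal (v : ℝ≥0) : ∫ x, x ^ 2 ∂(gaussianReal 0 v) = v := by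
  by_cases hv : v = 0
  · rw [hv, gaussianReal_zero_var]; simp [hv]
  · have hvpos : (0:ℝ) < v := NNReal.coe_pos.mpr (pos_iff_ne_zero.mpr hv)
    have hb : (0:ℝ) < (2 * (v:ℝ))⁻¹ := by positivity
    rw [integral_gaussianReal_eq v hv]
    have hrw : (fun x : ℝ => gaussianPDFReal 0 v x * x ^ 2)
        = fun x : ℝ => (Real.sqrt (2 * π * v))⁻¹ * (x ^ 2 * Real.exp (-(2 * (v:ℝ))⁻¹ * x ^ 2)) := by
      funext x; rw [gaussianPDFReal_zero_eq]; ring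
    rw [hrw, integral_const_mul, integral_sq_mul_exp hb]
    rw [Real.sqrt_inv]
    have h2v : (0:ℝ) < 2 * v := by positivity
    have hsq : Real.sqrt (2 * (v:ℝ)) * Real.sqrt (2 * (v:ℝ)) = 2 * v :=
      Real.mul_self_sqrt h2v.le
    have hpi : Real.sqrt (2 * π * (v:ℝ)) = Real.sqrt π * Real.sqrt (2 * v) := by
      rw [← Real.sqrt_mul Real.pi_pos.le]; ring_nf
    rw [hpi]
    have h1 : Real.sqrt π ≠ 0 := ne_of_gt (Real.sqrt_pos.mpr Real.pi_pos)
    have h2 : Real.sqrt (2 * (v:ℝ)) ≠ 0 := ne_of_gt (Real.sqrt_pos.mpr h2v)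
    field_simp


lemma integrable_sq_gaussianReal (v : ℝ≥0) :
    Integrable (fun x : ℝ => x ^ 2) (gaussianReal 0 v) := by
  by_cases hv : v = 0
  · rw [hv, gaussianReal_zero_var]
    refine ⟨(measurable_id.pow_const 2).aestronglyMeasurable, ?_⟩
    rw [HasFiniteIntegral, lintegral_dirac]
    simp
  · rw [gaussianReal_eq_withDensity v hv,
      integrable_withDensity_iff (measurable_gaussianPDFReal 0 v).real_toNNReal.coe_nnreal_ennreal
        (Filter.Eventually.of_forall fun x => ENNReal.coe_lt_top)]
    have hb : (0:ℝ) < (2 * (v:ℝ))⁻¹ := by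
      have : (0:ℝ) < v := NNReal.coe_pos.mpr (pos_iff_ne_zero.mpr hv)
      positivity
    have : (fun x : ℝ => x ^ 2 * ((gaussianPDFReal 0 v x).toNNReal : ℝ≥0∞).toReal)
        = fun x : ℝ => (Real.sqrt (2 * π * v))⁻¹ * (x ^ 2 * Real.exp (-(2 * (v:ℝ))⁻¹ * x ^ 2)) := by
      funext x
      rw [ENNReal.coe_toReal, Real.coe_toNNReal _ (gaussianPDFReal_nonneg 0 v x),
        gaussianPDFReal_zero_eq]
      ring
    rw [this]
    exact (integrable_sq_mul_exp hb).const_mul _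

lemma memℒp_two_id_gaussianReal (v : ℝ≥0) : MemLp id 2 (gaussianReal 0 v) := by
  refine (memLp_two_iff_integrable_sq aestronglyMeasurable_id).2 ?_
  simpa using integrable_sq_gaussianReal v

section transfer
variable {Ω : Type*} [MeasurableSpace Ω] {P : Measure Ω} {Z : Ω → ℝ} {v : ℝ≥0}

lemma gauss_mean_zero (hZ : AEMeasurable Z P)
    (hmap : Measure.map Z P = gaussianReal 0 v) : ∫ ω, Z ω ∂P = 0 := by
  have h : ∫ x, x ∂(Measure.map Z P) = ∫ ω, Z ω ∂P :=
    integral_map hZ aestronglyMeasurable_id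
  rw [← h, hmap, _root_.integral_id_gaussianReal]

lemma gauss_sq_moment (hZ : AEMeasurable Z P)
    (hmap : Measure.map Z P = gaussianReal 0 v) : ∫ ω, (Z ω) ^ 2 ∂P = v := by
  have h : ∫ x, x ^ 2 ∂(Measure.map Z P) = ∫ ω, (Z ω) ^ 2 ∂P :=
    integral_map hZ (measurable_id.pow_const 2).aestronglyMeasurable
  rw [← h, hmap, integral_sq_gaussianReal]

lemma gauss_memℒp_two (hZ : AEMeasurable Z P)
    (hmap : Measure.map Z P = gaussianReal 0 v) : MemLp Z 2 P := by
  have h := (memLp_map_measure_iff aestronglyMeasurable_id hZ).1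
    (by rw [hmap]; exact memℒp_two_id_gaussianReal v)
  simpa [Function.comp] using h

lemma MeasureTheory.MemLp.integrable_mul2 {f g : Ω → ℝ} (hf : MemLp f 2 P) (hg : MemLp g 2 P) :
    Integrable (fun ω => f ω * g ω) P := by
  have h := hg.smul hf (p := 2) (q := 2) (r := 1)
  exact memLp_one_iff_integrable.1 h

end transfer

lemma hsNormSq_eq_sum {n : ℕ} (A : Matrix (Fin n) (Fin n) ℝ) :
    hsNormSq A = ∑ i, ∑ j, (A i j) ^ 2 := by
  simp only [hsNormSq, hsInner, Matrix.trace, Matrix.diag, Matrix.mul_apply,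
    Matrix.transpose_apply, sq]
  exact Finset.sum_comm

lemma measurable_entry {n : ℕ} (i j : Fin n) :
    Measurable (fun M : Matrix (Fin n) (Fin n) ℝ => M i j) :=
  (measurable_pi_apply j).comp (measurable_pi_apply i)


/-- Itô isometry for simple processes: if `0 = t₀ < t₁ < ⋯ < t_m = T`,
`(𝓕_l)` is an increasing family of sub-σ-algebras, each `h_k` is `𝓕_k`-measurable and
square-integrable, and each `ΔB_k` is `𝓕_{k+1}`-measurable, independent of `𝓕_k`, with
independent centered Gaussian entries of variance `t_{k+1} − t_k`, then
`𝔼‖Σ_k h_k ΔB_k‖²_HS = n Σ_k (t_{k+1} − t_k) 𝔼‖h_k‖²_HS`. -/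
theorem ito_isometry_simple
    {n : ℕ} {Ω : Type*} [mΩ : MeasurableSpace Ω]
    (P : Measure Ω) [IsProbabilityMeasure P]
    (m : ℕ) (T : ℝ) (t : ℕ → ℝ)
    (ht0 : t 0 = 0) (htm : t m = T) (ht_mono : ∀ k < m, t k < t (k + 1))
    (F : ℕ → MeasurableSpace Ω) (hF_mono : Monotone F) (hF_le : ∀ k, F k ≤ mΩ)
    (h ΔB : ℕ → Ω → Matrix (Fin n) (Fin n) ℝ)
    (hh_meas : ∀ k < m, @Measurable _ _ (F k) _ (h k))
    (hh_sq : ∀ k < m, Integrable (fun ω => hsNormSq (h k ω)) P)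
    (hΔB_meas : ∀ k < m, @Measurable _ _ (F (k + 1)) _ (ΔB k))
    (hΔB_indep : ∀ k < m,
      Indep (MeasurableSpace.comap (ΔB k) matrixMeasurableSpace) (F k) P)
    (hΔB_entries_indep : ∀ k < m,
      iIndepFun
        (fun p : Fin n × Fin n => fun ω => ΔB k ω p.1 p.2) P)
    (hΔB_gauss : ∀ k < m, ∀ i j : Fin n,
      Measure.map (fun ω => ΔB k ω i j) P
        = gaussianReal 0 (Real.toNNReal (t (k + 1) - t k))) :
    ∫ ω, hsNormSq (∑ k ∈ Finset.range m, h k ω * ΔB k ω) ∂P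
      = (n : ℝ) * ∑ k ∈ Finset.range m,
          (t (k + 1) - t k) * ∫ ω, hsNormSq (h k ω) ∂P := by
  -- basic measurability
  have hmh : ∀ k < m, Measurable (h k) := fun k hk => (hh_meas k hk).mono (hF_le k) le_rfl
  have hmB : ∀ k < m, Measurable (ΔB k) := fun k hk => (hΔB_meas k hk).mono (hF_le (k + 1)) le_rfl
  have hmh' : ∀ k < m, ∀ i a : Fin n, Measurable (fun ω => h k ω i a) :=
    fun k hk i a => (measurable_entry i a).comp (hmh k hk)
  have hmB' : ∀ k < m, ∀ a j : Fin n, Measurable (fun ω => ΔB k ω a j) :=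
    fun k hk a j => (measurable_entry a j).comp (hmB k hk)
  have hd_pos : ∀ k < m, 0 ≤ t (k + 1) - t k := fun k hk => sub_nonneg.2 (ht_mono k hk).le
  -- moments of ΔB entries
  have hBL2 : ∀ k < m, ∀ a j : Fin n, MemLp (fun ω => ΔB k ω a j) 2 P :=
    fun k hk a j => gauss_memℒp_two (hmB' k hk a j).aemeasurable (hΔB_gauss k hk a j)
  have hB0 : ∀ k < m, ∀ a j : Fin n, ∫ ω, ΔB k ω a j ∂P = 0 :=
    fun k hk a j => gauss_mean_zero (hmB' k hk a j).aemeasurable (hΔB_gauss k hk a j)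
  have hB2 : ∀ k < m, ∀ a j : Fin n, ∫ ω, (ΔB k ω a j) ^ 2 ∂P = t (k + 1) - t k := by
    intro k hk a j
    rw [gauss_sq_moment (hmB' k hk a j).aemeasurable (hΔB_gauss k hk a j)]
    exact Real.coe_toNNReal _ (hd_pos k hk)
  -- L² bounds on entries of h
  have hhL2 : ∀ k < m, ∀ i a : Fin n, MemLp (fun ω => h k ω i a) 2 P := by
    intro k hk i a
    refine (memLp_two_iff_integrable_sq (hmh' k hk i a).aestronglyMeasurable).2 ?_
    refine (hh_sq k hk).mono' ((hmh' k hk i a).pow_const 2).aestronglyMeasurable ?_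
    refine Filter.Eventually.of_forall fun ω => ?_
    rw [Real.norm_eq_abs, abs_of_nonneg (sq_nonneg _), hsNormSq_eq_sum]
    calc (h k ω i a) ^ 2 ≤ ∑ j, (h k ω i j) ^ 2 :=
          Finset.single_le_sum (f := fun j => (h k ω i j) ^ 2)
            (fun j _ => sq_nonneg _) (Finset.mem_univ a)
      _ ≤ ∑ i', ∑ j, (h k ω i' j) ^ 2 :=
          Finset.single_le_sum (f := fun i' => ∑ j, (h k ω i' j) ^ 2)
            (fun i' _ => Finset.sum_nonneg fun j _ => sq_nonneg _) (Finset.mem_univ i)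
  -- independence machinery
  have hind : ∀ k < m, ∀ Y : Ω → ℝ, Measurable[F k] Y →
      ∀ ψ : Matrix (Fin n) (Fin n) ℝ → ℝ, Measurable ψ →
      IndepFun (fun ω => ψ (ΔB k ω)) Y P := by
    intro k hk Y hY ψ hψ
    rw [IndepFun_iff_Indep]
    refine indep_of_indep_of_le_right (indep_of_indep_of_le_left (hΔB_indep k hk) ?_) hY.comap_le
    have : (fun ω => ψ (ΔB k ω)) = ψ ∘ ΔB k := rfl
    rw [this, ← MeasurableSpace.comap_comp]
    exact MeasurableSpace.comap_mono hψ.comap_le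
  -- L² of products h·ΔB
  have hWL2 : ∀ k < m, ∀ i a j : Fin n,
      MemLp (fun ω => h k ω i a * ΔB k ω a j) 2 P := by
    intro k hk i a j
    refine (memLp_two_iff_integrable_sq
      ((hmh' k hk i a).mul (hmB' k hk a j)).aestronglyMeasurable).2 ?_
    have hre : (fun ω => (h k ω i a * ΔB k ω a j) ^ 2)
        = fun ω => (fun M : Matrix (Fin n) (Fin n) ℝ => (M a j) ^ 2) (ΔB k ω)
            * (h k ω i a) ^ 2 := by
      funext ω; ring
    show Integrable (fun ω => (h k ω i a * ΔB k ω a j) ^ 2) P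
    rw [hre]
    have hi := hind k hk (fun ω => (h k ω i a) ^ 2)
      (((measurable_entry i a).comp (hh_meas k hk)).pow_const 2)
      (fun M => (M a j) ^ 2) ((measurable_entry a j).pow_const 2)
    exact hi.integrable_mul (hBL2 k hk a j).integrable_sq (hhL2 k hk i a).integrable_sq
  -- second moments of products of ΔB entries
  have hEBB : ∀ k < m, ∀ a b j : Fin n,
      ∫ ω, ΔB k ω a j * ΔB k ω b j ∂P = if a = b then t (k + 1) - t k else 0 := by
    intro k hk a b j
    by_cases hab : a = b
    · subst hab
      rw [if_pos rfl, ← hB2 k hk a j]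
      congr 1; funext ω; ring
    · rw [if_neg hab]
      have hi : IndepFun (fun ω => ΔB k ω a j) (fun ω => ΔB k ω b j) P :=
        (hΔB_entries_indep k hk).indepFun
          (by simp [Prod.ext_iff, hab] : ((a, j) : Fin n × Fin n) ≠ (b, j))
      rw [show (fun ω => ΔB k ω a j * ΔB k ω b j)
          = (fun ω => ΔB k ω a j) * (fun ω => ΔB k ω b j) from rfl,
        hi.integral_mul_eq_mul_integral ((hBL2 k hk a j).integrable one_le_two).aestronglyMeasurable
          ((hBL2 k hk b j).integrable one_le_two).aestronglyMeasurable, hB0 k hk a j, zero_mul]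
  -- value of diagonal elementary terms
  have Ediag : ∀ k < m, ∀ i j a b : Fin n,
      ∫ ω, (h k ω i a * ΔB k ω a j) * (h k ω i b * ΔB k ω b j) ∂P
        = (∫ ω, h k ω i a * h k ω i b ∂P) * (if a = b then t (k + 1) - t k else 0) := by
    intro k hk i j a b
    have hre : (fun ω => (h k ω i a * ΔB k ω a j) * (h k ω i b * ΔB k ω b j))
        = fun ω => (fun M : Matrix (Fin n) (Fin n) ℝ => M a j * M b j) (ΔB k ω)
            * (h k ω i a * h k ω i b) := by
      funext ω; ring
    rw [hre]
    have hi := hind k hk (fun ω => h k ω i a * h k ω i b)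
      (((measurable_entry i a).comp (hh_meas k hk)).mul
        ((measurable_entry i b).comp (hh_meas k hk)))
      (fun M => M a j * M b j) ((measurable_entry a j).mul (measurable_entry b j))
    rw [show (fun ω => (fun M : Matrix (Fin n) (Fin n) ℝ => M a j * M b j) (ΔB k ω)
          * (h k ω i a * h k ω i b))
        = (fun ω => ΔB k ω a j * ΔB k ω b j) * (fun ω => h k ω i a * h k ω i b) from rfl,
      hi.integral_mul_eq_mul_integral
        ((hBL2 k hk a j).integrable_mul2 (hBL2 k hk b j)).aestronglyMeasurable
        ((hhL2 k hk i a).integrable_mul2 (hhL2 k hk i b)).aestronglyMeasurable,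
      hEBB k hk a b j, mul_comm]
  -- cross terms vanish
  have Ecross : ∀ k l : ℕ, k < l → l < m → ∀ i j a b : Fin n,
      ∫ ω, (h k ω i a * ΔB k ω a j) * (h l ω i b * ΔB l ω b j) ∂P = 0 := by
    intro k l hkl hlm i j a b
    have hkm : k < m := hkl.trans hlm
    have hre : (fun ω => (h k ω i a * ΔB k ω a j) * (h l ω i b * ΔB l ω b j))
        = (fun ω => (fun M : Matrix (Fin n) (Fin n) ℝ => M b j) (ΔB l ω))
            * (fun ω => (h k ω i a * ΔB k ω a j) * h l ω i b) := by
      funext ω; simp only [Pi.mul_apply]; ring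
    have hYmeas : Measurable[F l] (fun ω => (h k ω i a * ΔB k ω a j) * h l ω i b) := by
      have h1 : Measurable[F l] (h k) := (hh_meas k hkm).mono (hF_mono hkl.le) le_rfl
      have h2 : Measurable[F l] (ΔB k) := (hΔB_meas k hkm).mono (hF_mono hkl) le_rfl
      have h3 : Measurable[F l] (h l) := hh_meas l hlm
      exact (((measurable_entry i a).comp h1).mul ((measurable_entry a j).comp h2)).mul
        ((measurable_entry i b).comp h3)
    have hY_int : Integrable (fun ω => (h k ω i a * ΔB k ω a j) * h l ω i b) P :=
      (hWL2 k hkm i a j).integrable_mul2 (hhL2 l hlm i b)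
    have hi := hind l hlm (fun ω => (h k ω i a * ΔB k ω a j) * h l ω i b) hYmeas
      (fun M => M b j) (measurable_entry b j)
    rw [hre, hi.integral_mul_eq_mul_integral ((hBL2 l hlm b j).integrable one_le_two).aestronglyMeasurable hY_int.aestronglyMeasurable,
      hB0 l hlm b j, zero_mul]
  -- integrability of elementary products
  have hW_int : ∀ k < m, ∀ l < m, ∀ i j a b : Fin n,
      Integrable (fun ω => (h k ω i a * ΔB k ω a j) * (h l ω i b * ΔB l ω b j)) P :=
    fun k hk l hl i j a b => (hWL2 k hk i a j).integrable_mul2 (hWL2 l hl i b j)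
  -- expansion of entries of the matrix products
  have hXre : ∀ k l : ℕ, ∀ i j : Fin n,
      (fun ω => (h k ω * ΔB k ω) i j * ((h l ω * ΔB l ω) i j))
        = fun ω => ∑ a, ∑ b, (h k ω i a * ΔB k ω a j) * (h l ω i b * ΔB l ω b j) := by
    intro k l i j
    funext ω
    rw [Matrix.mul_apply, Matrix.mul_apply, Finset.sum_mul_sum]
  have hXint : ∀ k < m, ∀ l < m, ∀ i j : Fin n,
      Integrable (fun ω => (h k ω * ΔB k ω) i j * ((h l ω * ΔB l ω) i j)) P := by
    intro k hk l hl i j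
    rw [hXre k l i j]
    exact integrable_finset_sum _ fun a _ =>
      integrable_finset_sum _ fun b _ => hW_int k hk l hl i j a b
  have hXval : ∀ k < m, ∀ l < m, ∀ i j : Fin n,
      ∫ ω, (h k ω * ΔB k ω) i j * ((h l ω * ΔB l ω) i j) ∂P
        = if k = l then (t (k + 1) - t k) * ∑ a, ∫ ω, (h k ω i a) ^ 2 ∂P else 0 := by
    intro k hk l hl i j
    rw [hXre k l i j,
      integral_finset_sum _ (fun a _ =>
        integrable_finset_sum _ fun b _ => hW_int k hk l hl i j a b),
      Finset.sum_congr rfl (fun a _ =>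
        integral_finset_sum _ fun b _ => hW_int k hk l hl i j a b)]
    by_cases hkl : k = l
    · subst hkl
      rw [if_pos rfl,
        Finset.sum_congr rfl (fun a _ => Finset.sum_congr rfl fun b _ => Ediag k hk i j a b)]
      simp only [mul_ite, mul_zero, Finset.sum_ite_eq, Finset.mem_univ, if_true, Finset.mul_sum]
      refine Finset.sum_congr rfl fun a _ => ?_
      rw [mul_comm]
      congr 1
      congr 1
      funext ω; ring
    · rw [if_neg hkl]
      rcases lt_or_gt_of_ne hkl with hc | hc
      · exact Finset.sum_eq_zero fun a _ => Finset.sum_eq_zero fun b _ =>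
          Ecross k l hc hl i j a b
      · refine Finset.sum_eq_zero fun a _ => Finset.sum_eq_zero fun b _ => ?_
        rw [show (fun ω => (h k ω i a * ΔB k ω a j) * (h l ω i b * ΔB l ω b j))
            = fun ω => (h l ω i b * ΔB l ω b j) * (h k ω i a * ΔB k ω a j) from
              funext fun ω => by ring]
        exact Ecross l k hc hk i j b a
  -- integral of hsNormSq of h in terms of entries
  have hhsq_val : ∀ k < m,
      ∫ ω, hsNormSq (h k ω) ∂P = ∑ i, ∑ a, ∫ ω, (h k ω i a) ^ 2 ∂P := by
    intro k hk
    rw [show (fun ω => hsNormSq (h k ω)) = fun ω => ∑ i, ∑ a, (h k ω i a) ^ 2 from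
        funext fun ω => hsNormSq_eq_sum (h k ω),
      integral_finset_sum _ (fun i _ =>
        integrable_finset_sum _ fun a _ => (hhL2 k hk i a).integrable_sq)]
    exact Finset.sum_congr rfl fun i _ =>
      integral_finset_sum _ fun a _ => (hhL2 k hk i a).integrable_sq
  -- expansion of the main integrand
  have hSexp : (fun ω => hsNormSq (∑ k ∈ Finset.range m, h k ω * ΔB k ω))
      = fun ω => ∑ i, ∑ j, ∑ k ∈ Finset.range m, ∑ l ∈ Finset.range m,
          (h k ω * ΔB k ω) i j * ((h l ω * ΔB l ω) i j) := by
    funext ω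
    rw [hsNormSq_eq_sum]
    refine Finset.sum_congr rfl fun i _ => Finset.sum_congr rfl fun j _ => ?_
    rw [Matrix.sum_apply, sq, Finset.sum_mul_sum]
  rw [hSexp,
    integral_finset_sum _ (fun i _ => integrable_finset_sum _ fun j _ =>
      integrable_finset_sum _ fun k hk => integrable_finset_sum _ fun l hl =>
        hXint k (Finset.mem_range.1 hk) l (Finset.mem_range.1 hl) i j)]
  rw [Finset.sum_congr rfl (fun i _ =>
    integral_finset_sum _ (fun j _ =>
      integrable_finset_sum _ fun k hk => integrable_finset_sum _ fun l hl =>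
        hXint k (Finset.mem_range.1 hk) l (Finset.mem_range.1 hl) i j))]
  rw [Finset.sum_congr rfl (fun i _ => Finset.sum_congr rfl (fun j _ =>
    integral_finset_sum _ (fun k hk =>
      integrable_finset_sum _ fun l hl =>
        hXint k (Finset.mem_range.1 hk) l (Finset.mem_range.1 hl) i j)))]
  rw [Finset.sum_congr rfl (fun i _ => Finset.sum_congr rfl (fun j _ =>
    Finset.sum_congr rfl (fun k hk =>
      integral_finset_sum _ (fun l hl =>
        hXint k (Finset.mem_range.1 hk) l (Finset.mem_range.1 hl) i j))))]
  rw [Finset.sum_congr rfl (fun i _ => Finset.sum_congr rfl (fun j _ =>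
    Finset.sum_congr rfl (fun k hk => Finset.sum_congr rfl (fun l hl =>
      hXval k (Finset.mem_range.1 hk) l (Finset.mem_range.1 hl) i j))))]
  rw [Finset.sum_congr rfl (fun i _ => Finset.sum_congr rfl (fun j _ =>
    Finset.sum_congr rfl (fun k hk => by
      rw [Finset.sum_ite_eq, if_pos hk])))]
  have hR : ∑ k ∈ Finset.range m, (t (k + 1) - t k) * ∫ ω, hsNormSq (h k ω) ∂P
      = ∑ k ∈ Finset.range m, (t (k + 1) - t k) * ∑ i, ∑ a, ∫ ω, (h k ω i a) ^ 2 ∂P :=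
    Finset.sum_congr rfl fun k hk => by rw [hhsq_val k (Finset.mem_range.1 hk)]
  rw [hR]
  calc ∑ i : Fin n, ∑ _j : Fin n, ∑ k ∈ Finset.range m,
        (t (k + 1) - t k) * ∑ a, ∫ ω, (h k ω i a) ^ 2 ∂P
      = ∑ i : Fin n, (n : ℝ) * ∑ k ∈ Finset.range m,
          (t (k + 1) - t k) * ∑ a, ∫ ω, (h k ω i a) ^ 2 ∂P := by
        refine Finset.sum_congr rfl fun i _ => ?_
        rw [Finset.sum_const, Finset.card_univ, Fintype.card_fin, nsmul_eq_mul]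
    _ = (n : ℝ) * ∑ i : Fin n, ∑ k ∈ Finset.range m,
          (t (k + 1) - t k) * ∑ a, ∫ ω, (h k ω i a) ^ 2 ∂P := by
        rw [← Finset.mul_sum]
    _ = (n : ℝ) * ∑ k ∈ Finset.range m, ∑ i : Fin n,
          (t (k + 1) - t k) * ∑ a, ∫ ω, (h k ω i a) ^ 2 ∂P := by
        rw [Finset.sum_comm]
    _ = (n : ℝ) * ∑ k ∈ Finset.range m,
          (t (k + 1) - t k) * ∑ i, ∑ a, ∫ ω, (h k ω i a) ^ 2 ∂P := by
        congr 1
        exact Finset.sum_congr rfl fun k _ => (Finset.mul_sum _ _ _).symm
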